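/- Let (L, ∘_λ) be a commutative associative conformal superalgebra and (L, [·_λ ·]) a Lie conformal superalgebra on the same ℤ₂-graded ℂ[∂]-module. Then (L, ∘_λ, [·_λ ·]) is simultaneously a Poisson conformal superalgebra and a transposed Poisson conformal superalgebra if and only if for all homogeneous a, b, c ∈ L: a ∘_λ [b_μ c] = 0, [b_{μ−λ} a] ∘_μ c = 0, and [(a ∘_λ b)_{λ+μ} c] = 0. -/

import Mathlib

open Polynomial
open scoped TensorProduct

noncomputable section

namespace TPCSAFormal

/-- The super-sign `(-1)^{i·j}` for parities `i, j ∈ ℤ/2ℤ`. -/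
def sgn (i j : ZMod 2) : ℂ := (-1 : ℂ) ^ (i.val * j.val)

variable (L : Type*) [AddCommGroup L] [Module ℂ L]
  [Module (Polynomial ℂ) L] [IsScalarTower ℂ (Polynomial ℂ) L]

/-- A conformal `λ`-product on the `ℂ[∂]`-module `L`, recorded by its family of `n`-th
product coefficients: `a ∘_λ b = ∑_n λ^n • coeff n a b`, with finitely many nonzero terms.
This is exactly the data of a `ℂ`-bilinear map `L ⊗ L → ℂ[λ] ⊗ L`. -/
structure ConformalProduct where
  coeff : ℕ → L →ₗ[ℂ] L →ₗ[ℂ] L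
  coeff_finite : ∀ a b : L, ∃ N : ℕ, ∀ n : ℕ, N ≤ n → coeff n a b = 0

variable {L}

/-- The value `a ∘_λ b` of the `λ`-product at `λ ∈ ℂ`.  Since `ℂ` is infinite, identities
between such values for all `λ` are equivalent to the corresponding polynomial identities. -/
def ConformalProduct.mul (m : ConformalProduct L) (lam : ℂ) (a b : L) : L :=
  ∑ᶠ n : ℕ, lam ^ n • m.coeff n a b

/-- The value `a ∘_{-∂-λ} b`, where `∂` acts on `L` as scalar multiplication by
`X ∈ ℂ[∂]` (the variable `λ` being replaced by the operator `-∂-λ`). -/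
def ConformalProduct.cmul (m : ConformalProduct L) (lam : ℂ) (a b : L) : L :=
  ∑ᶠ n : ℕ, ((-((X : Polynomial ℂ) + C lam)) ^ n) • m.coeff n a b

variable (L) in
/-- A `ℤ₂`-grading on `L` making it a `ℤ₂`-graded `ℂ[∂]`-module: `L = L₀ ⊕ L₁` with
`∂ L_i ⊆ L_i`, where `∂` acts as multiplication by `X ∈ ℂ[∂]`. -/
structure SuperModule where
  grade : ZMod 2 → Submodule ℂ L
  isInternal : DirectSum.IsInternal grade
  X_smul_mem : ∀ (i : ZMod 2) (a : L), a ∈ grade i → (X : Polynomial ℂ) • a ∈ grade i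

/-- `m` is an even `λ`-product on the `ℤ₂`-graded `ℂ[∂]`-module `(L, S)`:
it is even with respect to the grading and conformally sesquilinear. -/
structure IsLambdaProduct (S : SuperModule L) (m : ConformalProduct L) : Prop where
  even : ∀ (i j : ZMod 2) (a b : L), a ∈ S.grade i → b ∈ S.grade j →
    ∀ n : ℕ, m.coeff n a b ∈ S.grade (i + j)
  sesq_left : ∀ (lam : ℂ) (a b : L),
    m.mul lam ((X : Polynomial ℂ) • a) b = (-lam) • m.mul lam a b
  sesq_right : ∀ (lam : ℂ) (a b : L),
    m.mul lam a ((X : Polynomial ℂ) • b) =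
      (X : Polynomial ℂ) • m.mul lam a b + lam • m.mul lam a b

/-- `(L, S, m)` is a commutative associative conformal superalgebra. -/
structure IsCommAssoc (S : SuperModule L) (m : ConformalProduct L)
    extends IsLambdaProduct S m : Prop where
  comm : ∀ (i j : ZMod 2) (a b : L), a ∈ S.grade i → b ∈ S.grade j →
    ∀ lam : ℂ, m.mul lam a b = sgn i j • m.cmul lam b a
  assoc : ∀ (lam mu : ℂ) (a b c : L),
    m.mul lam a (m.mul mu b c) = m.mul (lam + mu) (m.mul lam a b) c

/-- `(L, S, br)` is a Lie conformal superalgebra. -/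
structure IsLie (S : SuperModule L) (br : ConformalProduct L)
    extends IsLambdaProduct S br : Prop where
  skew : ∀ (i j : ZMod 2) (a b : L), a ∈ S.grade i → b ∈ S.grade j →
    ∀ lam : ℂ, br.mul lam a b = -(sgn i j • br.cmul lam b a)
  jacobi : ∀ (i j : ZMod 2) (a b : L), a ∈ S.grade i → b ∈ S.grade j →
    ∀ (c : L) (lam mu : ℂ),
      br.mul lam a (br.mul mu b c) =
        br.mul (lam + mu) (br.mul lam a b) c + sgn i j • br.mul mu b (br.mul lam a c)

/-- `(L, S, m, br)` is a transposed Poisson conformal superalgebra. -/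
structure IsTPCSA (S : SuperModule L) (m br : ConformalProduct L) : Prop where
  commAssoc : IsCommAssoc S m
  lie : IsLie S br
  transposedLeibniz : ∀ (i j : ZMod 2) (a b : L), a ∈ S.grade i → b ∈ S.grade j →
    ∀ (c : L) (lam mu : ℂ),
      (2 : ℂ) • m.mul lam a (br.mul mu b c) =
        br.mul (lam + mu) (m.mul lam a b) c + sgn i j • br.mul mu b (m.mul lam a c)

/-- `(L, S, m, br)` is a Poisson conformal superalgebra. -/
structure IsPCSA (S : SuperModule L) (m br : ConformalProduct L) : Prop where
  commAssoc : IsCommAssoc S m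
  lie : IsLie S br
  leibniz : ∀ (i j : ZMod 2) (a b : L), a ∈ S.grade i → b ∈ S.grade j →
    ∀ (c : L) (lam mu : ℂ),
      br.mul lam a (m.mul mu b c) =
        m.mul (lam + mu) (br.mul lam a b) c + sgn i j • m.mul mu b (br.mul lam a c)

/-- `(L, S, br, α)` is a Hom-Lie conformal superalgebra. -/
structure IsHomLie (S : SuperModule L) (br : ConformalProduct L) (α : L → L)
    extends IsLambdaProduct S br : Prop where
  map_smul_add : ∀ (c : ℂ) (a b : L), α (c • a + b) = c • α a + α b
  map_grade : ∀ (i : ZMod 2) (a : L), a ∈ S.grade i → α a ∈ S.grade i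
  commute_partial : ∀ a : L, α ((X : Polynomial ℂ) • a) = (X : Polynomial ℂ) • α a
  skew : ∀ (i j : ZMod 2) (a b : L), a ∈ S.grade i → b ∈ S.grade j →
    ∀ lam : ℂ, br.mul lam a b = -(sgn i j • br.cmul lam b a)
  homJacobi : ∀ (i j : ZMod 2) (a b : L), a ∈ S.grade i → b ∈ S.grade j →
    ∀ (c : L) (lam mu : ℂ),
      br.mul lam (α a) (br.mul mu b c) =
        br.mul (lam + mu) (br.mul lam a b) (α c) + sgn i j • br.mul mu (α b) (br.mul lam a c)

/-- `(L, S, p)` is a left-symmetric conformal superalgebra. -/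
structure IsLeftSymmetric (S : SuperModule L) (p : ConformalProduct L)
    extends IsLambdaProduct S p : Prop where
  leftSym : ∀ (i j : ZMod 2) (a b : L), a ∈ S.grade i → b ∈ S.grade j →
    ∀ (c : L) (lam mu : ℂ),
      p.mul (lam + mu) (p.mul lam a b) c - p.mul lam a (p.mul mu b c) =
        sgn i j • (p.mul (lam + mu) (p.mul mu b a) c - p.mul mu b (p.mul lam a c))

/-- `(L, S, p)` is a (left) Novikov conformal superalgebra. -/
structure IsNovikov (S : SuperModule L) (p : ConformalProduct L)
    extends IsLeftSymmetric S p : Prop where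
  novikov : ∀ (j k : ZMod 2) (b c : L), b ∈ S.grade j → c ∈ S.grade k →
    ∀ (a : L) (lam mu : ℂ),
      p.mul (lam + mu) (p.mul lam a b) c = sgn j k • p.cmul mu (p.mul lam a c) b

/-- `(L, S, mc, p)` is a Novikov-Poisson conformal superalgebra. -/
structure IsNovikovPoisson (S : SuperModule L) (mc p : ConformalProduct L) : Prop where
  commAssoc : IsCommAssoc S mc
  novikov : IsNovikov S p
  compat₁ : ∀ (lam mu : ℂ) (a b c : L),
    p.mul (lam + mu) (mc.mul lam a b) c = mc.mul lam a (p.mul mu b c)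
  compat₂ : ∀ (i j : ZMod 2) (a b : L), a ∈ S.grade i → b ∈ S.grade j →
    ∀ (c : L) (lam mu : ℂ),
      mc.mul (lam + mu) (p.mul lam a b) c - p.mul lam a (mc.mul mu b c) =
        sgn i j • (mc.mul (lam + mu) (p.mul mu b a) c - p.mul mu b (mc.mul lam a c))

/-- `(L, S, mc, p)` is a pre-Lie commutative conformal superalgebra. -/
structure IsPreLieComm (S : SuperModule L) (mc p : ConformalProduct L) : Prop where
  commAssoc : IsCommAssoc S mc
  leftSymmetric : IsLeftSymmetric S p
  compat : ∀ (i j : ZMod 2) (a b : L), a ∈ S.grade i → b ∈ S.grade j →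
    ∀ (c : L) (lam mu : ℂ),
      p.mul lam a (mc.mul mu b c) =
        mc.mul (lam + mu) (p.mul lam a b) c + sgn i j • mc.mul mu b (p.mul lam a c)

/-- `(L, S, mc, p)` is a pre-Lie Poisson conformal superalgebra. -/
structure IsPreLiePoisson (S : SuperModule L) (mc p : ConformalProduct L) : Prop where
  commAssoc : IsCommAssoc S mc
  leftSymmetric : IsLeftSymmetric S p
  compat₁ : ∀ (lam mu : ℂ) (a b c : L),
    p.mul (lam + mu) (mc.mul lam a b) c = mc.mul lam a (p.mul mu b c)
  compat₂ : ∀ (i j : ZMod 2) (a b : L), a ∈ S.grade i → b ∈ S.grade j →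
    ∀ (c : L) (lam mu : ℂ),
      mc.mul (lam + mu) (p.mul lam a b) c - p.mul lam a (mc.mul mu b c) =
        sgn i j • (mc.mul (lam + mu) (p.mul mu b a) c - p.mul mu b (mc.mul lam a c))


/-! ### Auxiliary infrastructure -/

lemma csmul_eq (c : ℂ) (x : L) : (C c : Polynomial ℂ) • x = c • x := by
  rw [← Polynomial.algebraMap_eq]; exact algebraMap_smul (Polynomial ℂ) c x

lemma sgn_symm (i j : ZMod 2) : sgn i j = sgn j i := by
  rw [sgn, sgn, Nat.mul_comm]

lemma sgn_mul_self (i j : ZMod 2) : sgn i j * sgn i j = 1 := by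
  rw [sgn, ← mul_pow]; norm_num

lemma zmod2_val (i : ZMod 2) : i.val = 0 ∨ i.val = 1 := by
  have := ZMod.val_lt i; omega

lemma sgn_add_left (i j k : ZMod 2) : sgn (i + j) k = sgn i k * sgn j k := by
  rcases zmod2_val i with hi | hi <;> rcases zmod2_val j with hj | hj <;>
    rcases zmod2_val k with hk | hk <;>
    simp [sgn, ZMod.val_add, hi, hj, hk] <;> norm_num

namespace ConformalProduct

lemma mul_eq_sum (m : ConformalProduct L) (lam : ℂ) (a b : L) {N : ℕ}
    (h : ∀ n, N ≤ n → m.coeff n a b = 0) :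
    m.mul lam a b = ∑ n ∈ Finset.range N, lam ^ n • m.coeff n a b := by
  refine finsum_eq_finset_sum_of_support_subset _ fun n hn => ?_
  simp only [Function.mem_support] at hn
  simp only [Finset.coe_range, Set.mem_Iio]
  by_contra hc
  exact hn (by rw [h n (not_lt.mp hc), smul_zero])

lemma cmul_eq_sum (m : ConformalProduct L) (lam : ℂ) (a b : L) {N : ℕ}
    (h : ∀ n, N ≤ n → m.coeff n a b = 0) :
    m.cmul lam a b
      = ∑ n ∈ Finset.range N, (-((X : Polynomial ℂ) + C lam)) ^ n • m.coeff n a b := by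
  refine finsum_eq_finset_sum_of_support_subset _ fun n hn => ?_
  simp only [Function.mem_support] at hn
  simp only [Finset.coe_range, Set.mem_Iio]
  by_contra hc
  exact hn (by rw [h n (not_lt.mp hc), smul_zero])

lemma mul_zero_right (m : ConformalProduct L) (lam : ℂ) (a : L) : m.mul lam a 0 = 0 := by
  rw [mul_eq_sum m lam a 0 (N := 0) (fun n _ => by simp)]
  simp

lemma mul_zero_left (m : ConformalProduct L) (lam : ℂ) (b : L) : m.mul lam 0 b = 0 := by
  rw [mul_eq_sum m lam 0 b (N := 0) (fun n _ => by simp)]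
  simp

lemma mul_add_right (m : ConformalProduct L) (lam : ℂ) (a b c : L) :
    m.mul lam a (b + c) = m.mul lam a b + m.mul lam a c := by
  obtain ⟨N1, h1⟩ := m.coeff_finite a b
  obtain ⟨N2, h2⟩ := m.coeff_finite a c
  have hb : ∀ n, max N1 N2 ≤ n → m.coeff n a b = 0 :=
    fun n hn => h1 n (le_trans (le_max_left _ _) hn)
  have hc : ∀ n, max N1 N2 ≤ n → m.coeff n a c = 0 :=
    fun n hn => h2 n (le_trans (le_max_right _ _) hn)
  have hbc : ∀ n, max N1 N2 ≤ n → m.coeff n a (b + c) = 0 :=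
    fun n hn => by rw [map_add, hb n hn, hc n hn, add_zero]
  rw [mul_eq_sum m lam a (b + c) hbc, mul_eq_sum m lam a b hb, mul_eq_sum m lam a c hc,
    ← Finset.sum_add_distrib]
  exact Finset.sum_congr rfl fun n _ => by rw [map_add, smul_add]

lemma mul_add_left (m : ConformalProduct L) (lam : ℂ) (a b c : L) :
    m.mul lam (a + b) c = m.mul lam a c + m.mul lam b c := by
  obtain ⟨N1, h1⟩ := m.coeff_finite a c
  obtain ⟨N2, h2⟩ := m.coeff_finite b c
  have ha : ∀ n, max N1 N2 ≤ n → m.coeff n a c = 0 :=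
    fun n hn => h1 n (le_trans (le_max_left _ _) hn)
  have hb : ∀ n, max N1 N2 ≤ n → m.coeff n b c = 0 :=
    fun n hn => h2 n (le_trans (le_max_right _ _) hn)
  have hab : ∀ n, max N1 N2 ≤ n → m.coeff n (a + b) c = 0 :=
    fun n hn => by rw [map_add, LinearMap.add_apply, ha n hn, hb n hn, add_zero]
  rw [mul_eq_sum m lam (a + b) c hab, mul_eq_sum m lam a c ha, mul_eq_sum m lam b c hb,
    ← Finset.sum_add_distrib]
  exact Finset.sum_congr rfl fun n _ => by rw [map_add, LinearMap.add_apply, smul_add]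

lemma mul_csmul_right (m : ConformalProduct L) (lam : ℂ) (a : L) (c : ℂ) (b : L) :
    m.mul lam a (c • b) = c • m.mul lam a b := by
  obtain ⟨N, h⟩ := m.coeff_finite a b
  have hb : ∀ n, N ≤ n → m.coeff n a (c • b) = 0 :=
    fun n hn => by rw [map_smul, h n hn, smul_zero]
  rw [mul_eq_sum m lam a (c • b) hb, mul_eq_sum m lam a b h, Finset.smul_sum]
  exact Finset.sum_congr rfl fun n _ => by rw [map_smul, smul_comm]

lemma mul_csmul_left (m : ConformalProduct L) (lam : ℂ) (c : ℂ) (a b : L) :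
    m.mul lam (c • a) b = c • m.mul lam a b := by
  obtain ⟨N, h⟩ := m.coeff_finite a b
  have ha : ∀ n, N ≤ n → m.coeff n (c • a) b = 0 :=
    fun n hn => by rw [map_smul, LinearMap.smul_apply, h n hn, smul_zero]
  rw [mul_eq_sum m lam (c • a) b ha, mul_eq_sum m lam a b h, Finset.smul_sum]
  exact Finset.sum_congr rfl fun n _ => by rw [map_smul, LinearMap.smul_apply, smul_comm]

lemma mul_neg_right (m : ConformalProduct L) (lam : ℂ) (a b : L) :
    m.mul lam a (-b) = -m.mul lam a b := by
  rw [← neg_one_smul ℂ b, mul_csmul_right, neg_one_smul]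

lemma mul_neg_left (m : ConformalProduct L) (lam : ℂ) (a b : L) :
    m.mul lam (-a) b = -m.mul lam a b := by
  rw [← neg_one_smul ℂ a, mul_csmul_left, neg_one_smul]

lemma mul_sub_right (m : ConformalProduct L) (lam : ℂ) (a b c : L) :
    m.mul lam a (b - c) = m.mul lam a b - m.mul lam a c := by
  rw [sub_eq_add_neg, mul_add_right, mul_neg_right, sub_eq_add_neg]

lemma mul_sub_left (m : ConformalProduct L) (lam : ℂ) (a b c : L) :
    m.mul lam (a - b) c = m.mul lam a c - m.mul lam b c := by
  rw [sub_eq_add_neg, mul_add_left, mul_neg_left, sub_eq_add_neg]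

lemma mul_sum_right (m : ConformalProduct L) (lam : ℂ) (a : L) {ι : Type*} (s : Finset ι)
    (f : ι → L) : m.mul lam a (∑ i ∈ s, f i) = ∑ i ∈ s, m.mul lam a (f i) := by
  classical
  induction s using Finset.induction_on with
  | empty => simp [mul_zero_right]
  | insert _ _ h ih =>
      rw [Finset.sum_insert h, Finset.sum_insert h, mul_add_right, ih]

lemma mul_sum_left (m : ConformalProduct L) (lam : ℂ) {ι : Type*} (s : Finset ι)
    (f : ι → L) (b : L) : m.mul lam (∑ i ∈ s, f i) b = ∑ i ∈ s, m.mul lam (f i) b := by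
  classical
  induction s using Finset.induction_on with
  | empty => simp [mul_zero_left]
  | insert _ _ h ih =>
      rw [Finset.sum_insert h, Finset.sum_insert h, mul_add_left, ih]

end ConformalProduct

namespace ConformalProduct

/-- Action of `-(∂+c₀)` in the first slot reduces via sesquilinearity. -/
lemma mul_shift_left (m : ConformalProduct L)
    (hs : ∀ (lam : ℂ) (a b : L), m.mul lam ((X : Polynomial ℂ) • a) b = (-lam) • m.mul lam a b)
    (lam c0 : ℂ) (x y : L) :
    m.mul lam ((-((X : Polynomial ℂ) + C c0)) • x) y = (lam - c0) • m.mul lam x y := by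
  have h1 : (-((X : Polynomial ℂ) + C c0)) • x = -((X : Polynomial ℂ) • x) + -(c0 • x) := by
    rw [neg_smul, add_smul, csmul_eq, neg_add]
  rw [h1, mul_add_left, mul_neg_left, mul_neg_left, hs, mul_csmul_left]
  module

lemma mul_shift_left_pow (m : ConformalProduct L)
    (hs : ∀ (lam : ℂ) (a b : L), m.mul lam ((X : Polynomial ℂ) • a) b = (-lam) • m.mul lam a b)
    (lam c0 : ℂ) (x y : L) (k : ℕ) :
    m.mul lam ((-((X : Polynomial ℂ) + C c0)) ^ k • x) y
      = (lam - c0) ^ k • m.mul lam x y := by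
  induction k with
  | zero => simp
  | succ k ih =>
      rw [pow_succ', mul_smul, mul_shift_left m hs, ih, pow_succ', mul_smul]

/-- Action of `-(∂+c₀)` in the second slot shifts by `lam`. -/
lemma mul_shift_right (m : ConformalProduct L)
    (hs : ∀ (lam : ℂ) (a b : L), m.mul lam a ((X : Polynomial ℂ) • b)
      = (X : Polynomial ℂ) • m.mul lam a b + lam • m.mul lam a b)
    (lam c0 : ℂ) (x y : L) :
    m.mul lam x ((-((X : Polynomial ℂ) + C c0)) • y)
      = (-((X : Polynomial ℂ) + C (c0 + lam))) • m.mul lam x y := by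
  have h1 : (-((X : Polynomial ℂ) + C c0)) • y = -((X : Polynomial ℂ) • y) + -(c0 • y) := by
    rw [neg_smul, add_smul, csmul_eq, neg_add]
  rw [h1, mul_add_right, mul_neg_right, mul_neg_right, hs, mul_csmul_right]
  have h2 : (-((X : Polynomial ℂ) + C (c0 + lam))) • m.mul lam x y
      = -((X : Polynomial ℂ) • m.mul lam x y) + -((c0 + lam) • m.mul lam x y) := by
    rw [neg_smul, add_smul, csmul_eq, neg_add]
  rw [h2]
  module

lemma mul_shift_right_pow (m : ConformalProduct L)
    (hs : ∀ (lam : ℂ) (a b : L), m.mul lam a ((X : Polynomial ℂ) • b)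
      = (X : Polynomial ℂ) • m.mul lam a b + lam • m.mul lam a b)
    (lam c0 : ℂ) (x y : L) (k : ℕ) :
    m.mul lam x ((-((X : Polynomial ℂ) + C c0)) ^ k • y)
      = (-((X : Polynomial ℂ) + C (c0 + lam))) ^ k • m.mul lam x y := by
  induction k with
  | zero => simp
  | succ k ih =>
      rw [pow_succ', mul_smul, mul_shift_right m hs, ih, pow_succ', mul_smul]

end ConformalProduct

/-- Vanishing of an `L`-valued polynomial function forces all coefficients to vanish. -/
lemma coeffs_eq_zero {N : ℕ} (v : ℕ → L) (h0 : ∀ n, N ≤ n → v n = 0)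
    (h : ∀ lam : ℂ, ∑ n ∈ Finset.range N, lam ^ n • v n = 0) (n : ℕ) : v n = 0 := by
  rcases le_or_gt N n with hn | hn
  · exact h0 n hn
  · rw [← Module.forall_dual_apply_eq_zero_iff ℂ]
    intro φ
    set P : Polynomial ℂ := ∑ k ∈ Finset.range N, C (φ (v k)) * X ^ k with hP
    have hev : ∀ lam : ℂ, P.eval lam = 0 := by
      intro lam
      have h2 := congrArg φ (h lam)
      simp only [map_sum, map_smul, map_zero, smul_eq_mul] at h2
      rw [hP]
      simp only [eval_finset_sum, eval_mul, eval_C, eval_pow, eval_X]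
      rw [← h2]
      exact Finset.sum_congr rfl fun k _ => by ring
    have hP0 : P = 0 := by
      apply Polynomial.funext
      intro r; rw [hev r, eval_zero]
    have hc : P.coeff n = φ (v n) := by
      rw [hP, Polynomial.finset_sum_coeff]
      simp only [Polynomial.coeff_C_mul, Polynomial.coeff_X_pow, mul_ite, mul_one, mul_zero]
      rw [Finset.sum_ite_eq (Finset.range N) n (fun k => φ (v k))]
      simp [hn]
    rw [← hc, hP0, Polynomial.coeff_zero]

namespace ConformalProduct

lemma coeff_eq_zero_of_mul (m : ConformalProduct L) (x y : L)
    (h : ∀ lam : ℂ, m.mul lam x y = 0) (n : ℕ) : m.coeff n x y = 0 := by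
  obtain ⟨N, hN⟩ := m.coeff_finite x y
  exact coeffs_eq_zero _ hN (fun lam => by rw [← mul_eq_sum m lam x y hN]; exact h lam) n

lemma cmul_eq_zero_of_coeff (m : ConformalProduct L) (lam : ℂ) (x y : L)
    (h : ∀ n, m.coeff n x y = 0) : m.cmul lam x y = 0 := by
  rw [cmul_eq_sum m lam x y (N := 0) (fun n _ => h n)]
  simp

end ConformalProduct

namespace SuperModule

lemma Xpow_smul_mem (S : SuperModule L) (i : ZMod 2) (a : L) (h : a ∈ S.grade i) (k : ℕ) :
    ((X : Polynomial ℂ) ^ k) • a ∈ S.grade i := by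
  induction k with
  | zero => simpa using h
  | succ k ih =>
      rw [pow_succ', mul_smul]
      exact S.X_smul_mem i _ ih

lemma poly_smul_mem (S : SuperModule L) (p : Polynomial ℂ) (i : ZMod 2) (a : L)
    (h : a ∈ S.grade i) : p • a ∈ S.grade i := by
  induction p using Polynomial.induction_on' with
  | add p q hp hq => rw [add_smul]; exact Submodule.add_mem _ hp hq
  | monomial n c =>
      have he : (monomial n c : Polynomial ℂ) • a = c • (((X : Polynomial ℂ) ^ n) • a) := by
        rw [← Polynomial.C_mul_X_pow_eq_monomial, mul_smul, csmul_eq]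
      rw [he]
      exact Submodule.smul_mem _ _ (Xpow_smul_mem S i a h n)

end SuperModule

namespace ConformalProduct

lemma mul_mem {S : SuperModule L} {m : ConformalProduct L}
    (he : ∀ (i j : ZMod 2) (a b : L), a ∈ S.grade i → b ∈ S.grade j →
      ∀ n : ℕ, m.coeff n a b ∈ S.grade (i + j))
    {i j : ZMod 2} {a b : L} (ha : a ∈ S.grade i) (hb : b ∈ S.grade j) (lam : ℂ) :
    m.mul lam a b ∈ S.grade (i + j) := by
  obtain ⟨N, hN⟩ := m.coeff_finite a b
  rw [mul_eq_sum m lam a b hN]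
  exact Submodule.sum_mem _ fun n _ => Submodule.smul_mem _ _ (he i j a b ha hb n)

end ConformalProduct

open ConformalProduct in
/-- Commutativity in the first slot of a bracket reduces to a scalar shift. -/
lemma lemCg {S : SuperModule L} {m br : ConformalProduct L}
    (hm : IsCommAssoc S m) (hbr : IsLie S br)
    {i j : ZMod 2} {a b : L} (ha : a ∈ S.grade i) (hb : b ∈ S.grade j)
    (c : L) (lam nu : ℂ) :
    br.mul nu (m.mul lam a b) c = sgn i j • br.mul nu (m.mul (nu - lam) b a) c := by
  obtain ⟨N, hN⟩ := m.coeff_finite b a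
  rw [hm.comm i j a b ha hb lam, mul_csmul_left, m.cmul_eq_sum lam b a hN, mul_sum_left,
    m.mul_eq_sum (nu - lam) b a hN, mul_sum_left]
  congr 1
  refine Finset.sum_congr rfl fun n _ => ?_
  rw [mul_shift_left_pow br hbr.sesq_left, mul_csmul_left]

open ConformalProduct in
/-- Skew-symmetry in the first slot of a product reduces to a scalar shift. -/
lemma lemCk {S : SuperModule L} {m br : ConformalProduct L}
    (hm : IsCommAssoc S m) (hbr : IsLie S br)
    {i j : ZMod 2} {a b : L} (ha : a ∈ S.grade i) (hb : b ∈ S.grade j)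
    (c : L) (gam nu : ℂ) :
    m.mul nu (br.mul gam a b) c = -(sgn i j • m.mul nu (br.mul (nu - gam) b a) c) := by
  obtain ⟨N, hN⟩ := br.coeff_finite b a
  rw [hbr.skew i j a b ha hb gam, mul_neg_left, mul_csmul_left, br.cmul_eq_sum gam b a hN,
    mul_sum_left, br.mul_eq_sum (nu - gam) b a hN, mul_sum_left]
  congr 2
  refine Finset.sum_congr rfl fun n _ => ?_
  rw [mul_shift_left_pow m hm.sesq_left, mul_csmul_left]

/-- The combined relation R from the two Leibniz rules. -/
lemma lemR {S : SuperModule L} {m br : ConformalProduct L}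
    (hpc : IsPCSA S m br) (htp : IsTPCSA S m br)
    {i j : ZMod 2} {a b : L} (ha : a ∈ S.grade i) (hb : b ∈ S.grade j)
    (c : L) (lam mu : ℂ) :
    m.mul lam a (br.mul mu b c)
      = br.mul (lam + mu) (m.mul lam a b) c
        + sgn i j • m.mul (lam + mu) (br.mul mu b a) c := by
  have t := htp.transposedLeibniz i j a b ha hb c lam mu
  have p := hpc.leibniz j i b a hb ha c mu lam
  rw [p, smul_add, smul_smul, sgn_symm j i, sgn_mul_self, one_smul, add_comm mu lam] at t
  linear_combination (norm := module) t

/-- Key identity I: the `[x,y]∘z` products in terms of `x∘[y,z]` products. -/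
lemma keyI {S : SuperModule L} {m br : ConformalProduct L}
    (hm : IsCommAssoc S m) (hbr : IsLie S br)
    (hpc : IsPCSA S m br) (htp : IsTPCSA S m br)
    {i j : ZMod 2} {a b : L} (ha : a ∈ S.grade i) (hb : b ∈ S.grade j)
    (c : L) (gam del : ℂ) :
    m.mul (gam + del) (br.mul gam a b) c
      = (1/2 : ℂ) • (sgn i j • m.mul del b (br.mul gam a c)
          - m.mul gam a (br.mul del b c)) := by
  have e1 := lemR hpc htp ha hb c gam del
  have e2 := lemR hpc htp hb ha c del gam
  rw [lemCg hm hbr ha hb c gam (gam + del), add_sub_cancel_left,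
    lemCk hm hbr hb ha c del (gam + del), add_sub_cancel_right, smul_neg, smul_smul,
    sgn_symm j i, sgn_mul_self, one_smul] at e1
  rw [add_comm del gam, sgn_symm j i] at e2
  have e2' : sgn i j • m.mul del b (br.mul gam a c)
      = sgn i j • br.mul (gam + del) (m.mul del b a) c
        + m.mul (gam + del) (br.mul gam a b) c := by
    rw [e2, smul_add, smul_smul, sgn_mul_self, one_smul]
  linear_combination (norm := module) (1/2 : ℂ) • e1 - (1/2 : ℂ) • e2'

/-- Key identity II: the `[x∘y, z]` brackets in terms of `x∘[y,z]` products. -/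
lemma keyII {S : SuperModule L} {m br : ConformalProduct L}
    (hm : IsCommAssoc S m) (hbr : IsLie S br)
    (hpc : IsPCSA S m br) (htp : IsTPCSA S m br)
    {i j : ZMod 2} {a b : L} (ha : a ∈ S.grade i) (hb : b ∈ S.grade j)
    (c : L) (gam del : ℂ) :
    br.mul (gam + del) (m.mul gam a b) c
      = (1/2 : ℂ) • (m.mul gam a (br.mul del b c)
          + sgn i j • m.mul del b (br.mul gam a c)) := by
  have e1 := lemR hpc htp ha hb c gam del
  have e2 := lemR hpc htp hb ha c del gam
  rw [lemCg hm hbr ha hb c gam (gam + del), add_sub_cancel_left,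
    lemCk hm hbr hb ha c del (gam + del), add_sub_cancel_right, smul_neg, smul_smul,
    sgn_symm j i, sgn_mul_self, one_smul] at e1
  rw [add_comm del gam, sgn_symm j i] at e2
  have e2' : sgn i j • m.mul del b (br.mul gam a c)
      = sgn i j • br.mul (gam + del) (m.mul del b a) c
        + m.mul (gam + del) (br.mul gam a b) c := by
    rw [e2, smul_add, smul_smul, sgn_mul_self, one_smul]
  rw [lemCg hm hbr ha hb c gam (gam + del), add_sub_cancel_left]
  linear_combination (norm := module) (-(1/2) : ℂ) • e1 - (1/2 : ℂ) • e2'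

lemma sgn_eq_one_or (i j : ZMod 2) : sgn i j = 1 ∨ sgn i j = -1 := by
  rcases zmod2_val i with hi | hi <;> rcases zmod2_val j with hj | hj <;>
    simp [sgn, hi, hj]

open ConformalProduct in
/-- The operator-substituted identity (★★). -/
lemma lemStar {S : SuperModule L} {m br : ConformalProduct L}
    (hm : IsCommAssoc S m) (hbr : IsLie S br)
    (hpc : IsPCSA S m br) (htp : IsTPCSA S m br)
    {i j k : ZMod 2} {a b c : L} (ha : a ∈ S.grade i) (hb : b ∈ S.grade j)
    (hc : c ∈ S.grade k) (lam nu : ℂ) :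
    br.mul nu (m.mul lam a b) c
      = (3/2 : ℂ) • m.mul lam a (br.mul (nu - lam) b c)
        + (1/2 : ℂ) • m.mul nu (br.mul lam a b) c := by
  obtain ⟨N1, hN1⟩ := br.coeff_finite c (m.mul lam a b)
  obtain ⟨N2, hN2⟩ := br.coeff_finite c b
  obtain ⟨N3, hN3⟩ := m.coeff_finite c (br.mul lam a b)
  set N := max N1 (max N2 N3) with hNdef
  have hb1 : ∀ n, N ≤ n → br.coeff n c (m.mul lam a b) = 0 :=
    fun n hn => hN1 n (le_trans (le_max_left _ _) hn)
  have hb2 : ∀ n, N ≤ n → br.coeff n c b = 0 :=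
    fun n hn => hN2 n (le_trans (le_trans (le_max_left _ _) (le_max_right N1 _)) hn)
  have hb3 : ∀ n, N ≤ n → m.coeff n c (br.mul lam a b) = 0 :=
    fun n hn => hN3 n (le_trans (le_trans (le_max_right _ _) (le_max_right N1 _)) hn)
  -- Step 1: the pointwise scalar identity (★)
  have hstar : ∀ gam : ℂ, br.mul gam c (m.mul lam a b)
      = (3/2 : ℂ) • (sgn k i • m.mul lam a (br.mul gam c b))
        - (1/2 : ℂ) • m.mul gam c (br.mul lam a b) := by
    intro gam
    have hp := hpc.leibniz k i c a hc ha b gam lam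
    rw [keyI hm hbr hpc htp hc ha b gam lam] at hp
    linear_combination (norm := module) hp
  -- Step 2: extract the coefficient identities
  have hcoeff : ∀ n : ℕ, br.coeff n c (m.mul lam a b)
      = (3/2 : ℂ) • (sgn k i • m.mul lam a (br.coeff n c b))
        - (1/2 : ℂ) • m.coeff n c (br.mul lam a b) := by
    have h0 : ∀ n, N ≤ n → (br.coeff n c (m.mul lam a b)
        - ((3/2 : ℂ) • (sgn k i • m.mul lam a (br.coeff n c b))
          - (1/2 : ℂ) • m.coeff n c (br.mul lam a b))) = 0 := by
      intro n hn
      rw [hb1 n hn, hb2 n hn, hb3 n hn, mul_zero_right]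
      simp
    have hsum : ∀ gam : ℂ, ∑ n ∈ Finset.range N,
        gam ^ n • (br.coeff n c (m.mul lam a b)
          - ((3/2 : ℂ) • (sgn k i • m.mul lam a (br.coeff n c b))
            - (1/2 : ℂ) • m.coeff n c (br.mul lam a b))) = 0 := by
      intro gam
      have e1 := br.mul_eq_sum gam c (m.mul lam a b) hb1
      have e2 : m.mul lam a (br.mul gam c b)
          = ∑ n ∈ Finset.range N, gam ^ n • m.mul lam a (br.coeff n c b) := by
        rw [br.mul_eq_sum gam c b hb2, mul_sum_right]
        exact Finset.sum_congr rfl fun n _ => mul_csmul_right m lam a _ _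
      have e3 := m.mul_eq_sum gam c (br.mul lam a b) hb3
      have hst := hstar gam
      rw [e1, e2, e3, Finset.smul_sum, Finset.smul_sum, Finset.smul_sum] at hst
      have hterm : ∀ n ∈ Finset.range N,
          gam ^ n • (br.coeff n c (m.mul lam a b)
            - ((3/2 : ℂ) • (sgn k i • m.mul lam a (br.coeff n c b))
              - (1/2 : ℂ) • m.coeff n c (br.mul lam a b)))
          = gam ^ n • br.coeff n c (m.mul lam a b)
            - ((3/2 : ℂ) • (sgn k i • (gam ^ n • m.mul lam a (br.coeff n c b)))
              - (1/2 : ℂ) • (gam ^ n • m.coeff n c (br.mul lam a b))) :=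
        fun n _ => by module
      rw [Finset.sum_congr rfl hterm, Finset.sum_sub_distrib, Finset.sum_sub_distrib,
        hst, sub_self]
    intro n
    have := coeffs_eq_zero _ h0 hsum n
    exact sub_eq_zero.mp this
  -- Step 3: resubstitute the operator `-(∂+ν)`
  have hv := br.cmul_eq_sum nu c (m.mul lam a b) hb1
  have hw2 := m.cmul_eq_sum nu c (br.mul lam a b) hb3
  have hw1 : m.mul lam a (br.mul (nu - lam) b c)
      = -(sgn j k • ∑ n ∈ Finset.range N,
          (-((X : Polynomial ℂ) + C nu)) ^ n • m.mul lam a (br.coeff n c b)) := by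
    rw [hbr.skew j k b c hb hc (nu - lam), mul_neg_right, mul_csmul_right,
      br.cmul_eq_sum (nu - lam) c b hb2, mul_sum_right]
    congr 2
    refine Finset.sum_congr rfl fun n _ => ?_
    rw [mul_shift_right_pow m hm.sesq_right, sub_add_cancel]
  have hw1' : ∑ n ∈ Finset.range N,
      (-((X : Polynomial ℂ) + C nu)) ^ n • m.mul lam a (br.coeff n c b)
      = -(sgn j k • m.mul lam a (br.mul (nu - lam) b c)) := by
    rw [hw1, smul_neg, smul_smul, sgn_mul_self, one_smul, neg_neg]
  have hopsum : br.cmul nu c (m.mul lam a b)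
      = (3/2 : ℂ) • (sgn k i • -(sgn j k • m.mul lam a (br.mul (nu - lam) b c)))
        - (1/2 : ℂ) • m.cmul nu c (br.mul lam a b) := by
    rw [hv, hw2, ← hw1', Finset.smul_sum, Finset.smul_sum, Finset.smul_sum,
      ← Finset.sum_sub_distrib]
    refine Finset.sum_congr rfl fun n _ => ?_
    rw [hcoeff n]
    module
  -- Step 4: convert the `cmul`s back via skew-symmetry and commutativity
  have hG : br.cmul nu c (m.mul lam a b)
      = -(sgn (i + j) k • br.mul nu (m.mul lam a b) c) := by
    rw [hbr.skew (i + j) k (m.mul lam a b) c (mul_mem hm.even ha hb lam) hc nu,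
      smul_neg, smul_smul, sgn_mul_self, one_smul, neg_neg]
  have hK : m.cmul nu c (br.mul lam a b)
      = sgn (i + j) k • m.mul nu (br.mul lam a b) c := by
    rw [hm.comm (i + j) k (br.mul lam a b) c (mul_mem hbr.even ha hb lam) hc nu,
      smul_smul, sgn_mul_self, one_smul]
  rw [hG, hK] at hopsum
  rw [sgn_add_left i j k, sgn_symm k i] at hopsum
  rcases sgn_eq_one_or i k with h1 | h1 <;> rcases sgn_eq_one_or j k with h2 | h2 <;>
    rw [h1, h2] at hopsum <;>
    first
      | linear_combination (norm := module) hopsum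
      | linear_combination (norm := module) (-1 : ℂ) • hopsum

/-- The cyclic relation J. -/
lemma lemJ {S : SuperModule L} {m br : ConformalProduct L}
    (hm : IsCommAssoc S m) (hbr : IsLie S br)
    (hpc : IsPCSA S m br) (htp : IsTPCSA S m br)
    {i j k : ZMod 2} {a b c : L} (ha : a ∈ S.grade i) (hb : b ∈ S.grade j)
    (hc : c ∈ S.grade k) (gam del : ℂ) :
    sgn i j • m.mul del b (br.mul gam a c) = (3 : ℂ) • m.mul gam a (br.mul del b c) := by
  have hs := lemStar hm hbr hpc htp ha hb hc gam (gam + del)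
  rw [add_sub_cancel_left] at hs
  rw [keyI hm hbr hpc htp ha hb c gam del] at hs
  rw [keyII hm hbr hpc htp ha hb c gam del] at hs
  linear_combination (norm := module) (4 : ℂ) • hs

/-- The mixed products `x ∘_λ [y_μ z]` all vanish. -/
lemma lemA0 {S : SuperModule L} {m br : ConformalProduct L}
    (hm : IsCommAssoc S m) (hbr : IsLie S br)
    (hpc : IsPCSA S m br) (htp : IsTPCSA S m br)
    {i j k : ZMod 2} {a b c : L} (ha : a ∈ S.grade i) (hb : b ∈ S.grade j)
    (hc : c ∈ S.grade k) (lam mu : ℂ) :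
    m.mul lam a (br.mul mu b c) = 0 := by
  have h1 := lemJ hm hbr hpc htp ha hb hc lam mu
  have h2 := lemJ hm hbr hpc htp hb ha hc mu lam
  have h3 : m.mul lam a (br.mul mu b c) = (9 : ℂ) • m.mul lam a (br.mul mu b c) := by
    calc m.mul lam a (br.mul mu b c)
        = (sgn i j * sgn j i) • m.mul lam a (br.mul mu b c) := by
          rw [sgn_symm j i, sgn_mul_self, one_smul]
      _ = sgn i j • (sgn j i • m.mul lam a (br.mul mu b c)) := (smul_smul _ _ _).symm
      _ = sgn i j • ((3 : ℂ) • m.mul mu b (br.mul lam a c)) := by rw [h2]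
      _ = (3 : ℂ) • (sgn i j • m.mul mu b (br.mul lam a c)) := smul_comm _ _ _
      _ = (3 : ℂ) • ((3 : ℂ) • m.mul lam a (br.mul mu b c)) := by rw [h1]
      _ = (9 : ℂ) • m.mul lam a (br.mul mu b c) := by
          rw [smul_smul]; norm_num
  have h4 : (8 : ℂ) • m.mul lam a (br.mul mu b c) = 0 := by
    linear_combination (norm := module) (-1 : ℂ) • h3
  calc m.mul lam a (br.mul mu b c)
      = (8 : ℂ)⁻¹ • ((8 : ℂ) • m.mul lam a (br.mul mu b c)) := by
        rw [smul_smul]; norm_num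
    _ = 0 := by rw [h4, smul_zero]


/-- a commutative associative conformal superalgebra and a Lie conformal
superalgebra on the same `ℤ₂`-graded `ℂ[∂]`-module form both a Poisson conformal
superalgebra and a transposed Poisson conformal superalgebra if and only if
`a ∘_λ [b_μ c] = [b_{μ-λ} a] ∘_μ c = [(a ∘_λ b)_{λ+μ} c] = 0` for all homogeneous `a, b, c`. -/
theorem statement_9 (S : SuperModule L) (m br : ConformalProduct L)
    (hm : IsCommAssoc S m) (hbr : IsLie S br) :
    (IsPCSA S m br ∧ IsTPCSA S m br) ↔
      ∀ (i j k : ZMod 2) (a b c : L), a ∈ S.grade i → b ∈ S.grade j → c ∈ S.grade k →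
        ∀ lam mu : ℂ,
          m.mul lam a (br.mul mu b c) = 0 ∧
          m.mul mu (br.mul (mu - lam) b a) c = 0 ∧
          br.mul (lam + mu) (m.mul lam a b) c = 0 := by
  constructor
  · rintro ⟨hpc, htp⟩ i j k a b c ha hb hc lam mu
    refine ⟨lemA0 hm hbr hpc htp ha hb hc lam mu, ?_, ?_⟩
    · have e := keyI hm hbr hpc htp hb ha c (mu - lam) lam
      rw [sub_add_cancel, lemA0 hm hbr hpc htp ha hb hc lam (mu - lam),
        lemA0 hm hbr hpc htp hb ha hc (mu - lam) lam] at e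
      rw [e]
      simp
    · have e := keyII hm hbr hpc htp ha hb c lam mu
      rw [lemA0 hm hbr hpc htp ha hb hc lam mu,
        lemA0 hm hbr hpc htp hb ha hc mu lam] at e
      rw [e]
      simp
  · intro h
    have ZA : ∀ (i j k : ZMod 2) (x y z : L), x ∈ S.grade i → y ∈ S.grade j →
        z ∈ S.grade k → ∀ lam mu : ℂ, m.mul lam x (br.mul mu y z) = 0 :=
      fun i j k x y z hx hy hz lam mu => (h i j k x y z hx hy hz lam mu).1
    have ZK : ∀ (i j k : ZMod 2) (x y z : L), x ∈ S.grade i → y ∈ S.grade j →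
        z ∈ S.grade k → ∀ gam nu : ℂ, m.mul nu (br.mul gam x y) z = 0 := by
      intro i j k x y z hx hy hz gam nu
      have e := (h j i k y x z hy hx hz (nu - gam) nu).2.1
      rwa [sub_sub_cancel] at e
    have ZG : ∀ (i j k : ZMod 2) (x y z : L), x ∈ S.grade i → y ∈ S.grade j →
        z ∈ S.grade k → ∀ lam nu : ℂ, br.mul nu (m.mul lam x y) z = 0 := by
      intro i j k x y z hx hy hz lam nu
      have e := (h i j k x y z hx hy hz lam (nu - lam)).2.2
      have hr : lam + (nu - lam) = nu := by ring
      rwa [hr] at e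
    have ZB : ∀ (i j k : ZMod 2) (x y z : L), x ∈ S.grade i → y ∈ S.grade j →
        z ∈ S.grade k → ∀ lam mu : ℂ, br.mul lam x (m.mul mu y z) = 0 := by
      intro i j k x y z hx hy hz lam mu
      have hcf : ∀ n, br.coeff n (m.mul mu y z) x = 0 :=
        br.coeff_eq_zero_of_mul _ _ (fun nu => ZG j k i y z x hy hz hx mu nu)
      rw [hbr.skew i (j + k) x (m.mul mu y z) hx
        (ConformalProduct.mul_mem hm.even hy hz mu) lam,
        br.cmul_eq_zero_of_coeff lam _ _ hcf, smul_zero, neg_zero]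
    constructor
    · refine ⟨hm, hbr, ?_⟩
      intro i j a b ha hb c lam mu
      have htop : c ∈ ⨆ k, S.grade k := by
        rw [S.isInternal.submodule_iSup_eq_top]; trivial
      refine Submodule.iSup_induction (motive := fun c => br.mul lam a (m.mul mu b c)
        = m.mul (lam + mu) (br.mul lam a b) c + sgn i j • m.mul mu b (br.mul lam a c))
        S.grade htop ?_ ?_ ?_
      · intro k c hc
        rw [ZB i j k a b c ha hb hc lam mu, ZK i j k a b c ha hb hc lam (lam + mu),
          ZA j i k b a c hb ha hc mu lam]
        simp
      · simp [ConformalProduct.mul_zero_right]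
      · intro x y hx hy
        simp only [ConformalProduct.mul_add_right, smul_add] at hx hy ⊢
        rw [hx, hy]
        abel
    · refine ⟨hm, hbr, ?_⟩
      intro i j a b ha hb c lam mu
      have htop : c ∈ ⨆ k, S.grade k := by
        rw [S.isInternal.submodule_iSup_eq_top]; trivial
      refine Submodule.iSup_induction (motive := fun c => (2 : ℂ) • m.mul lam a (br.mul mu b c)
        = br.mul (lam + mu) (m.mul lam a b) c + sgn i j • br.mul mu b (m.mul lam a c))
        S.grade htop ?_ ?_ ?_
      · intro k c hc
        rw [ZA i j k a b c ha hb hc lam mu, ZG i j k a b c ha hb hc lam (lam + mu),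
          ZB j i k b a c hb ha hc mu lam]
        simp
      · simp [ConformalProduct.mul_zero_right]
      · intro x y hx hy
        simp only [ConformalProduct.mul_add_right, smul_add] at hx hy ⊢
        rw [hx, hy]
        abel

end TPCSAFormal
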